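/- Let L be a Lie superalgebra and D an odd derivation of L with D² = 0. Define the derived bracket [a,b]_D := (−1)^{|a|}[Da, b] for homogeneous a, b. Then the derived bracket satisfies the graded Leibniz (Loday) identity: [a,[b,c]_D]_D = [[a,b]_D, c]_D + (−1)^{(|a|+1)(|b|+1)} [b,[a,c]_D]_D for all homogeneous a, b, c ∈ L. -/

import Mathlib

/-- The derived bracket `[a, x]_D = (-1)^{|a|} [D a, x]` of an element `a` of
parity `p` with an arbitrary element `x`. -/
def derivedBracket {R L : Type*} [CommRing R] [AddCommGroup L] [Module R L]
    (bracket : L →ₗ[R] L →ₗ[R] L) (D : L →ₗ[R] L) (p : ZMod 2) (a x : L) : L :=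
  (-1 : ℤ) ^ p.val • bracket (D a) x

/-- If `D` is an odd derivation of a Lie superalgebra with `D² = 0`, the derived
bracket satisfies the graded Leibniz (Loday) identity. -/
theorem derivedBracket_loday {R L : Type*} [CommRing R] [AddCommGroup L] [Module R L]
    (G : ZMod 2 → Submodule R L)
    (bracket : L →ₗ[R] L →ₗ[R] L)
    (hgrade : ∀ (p q : ZMod 2) (a b : L), a ∈ G p → b ∈ G q → bracket a b ∈ G (p + q))
    (hskew : ∀ (p q : ZMod 2) (a b : L), a ∈ G p → b ∈ G q →
      bracket a b = -((-1 : ℤ) ^ (p.val * q.val) • bracket b a))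
    (hjacobi : ∀ (p q : ZMod 2) (a b c : L), a ∈ G p → b ∈ G q →
      bracket a (bracket b c) =
        bracket (bracket a b) c + (-1 : ℤ) ^ (p.val * q.val) • bracket b (bracket a c))
    (D : L →ₗ[R] L)
    (hDodd : ∀ (p : ZMod 2) (a : L), a ∈ G p → D a ∈ G (p + 1))
    (hder : ∀ (p : ZMod 2) (a b : L), a ∈ G p →
      D (bracket a b) = bracket (D a) b + (-1 : ℤ) ^ p.val • bracket a (D b))
    (hD2 : ∀ x : L, D (D x) = 0)
    (p q r : ZMod 2) (a b c : L) (ha : a ∈ G p) (hb : b ∈ G q) (hc : c ∈ G r) :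
    derivedBracket bracket D p a (derivedBracket bracket D q b c) =
      derivedBracket bracket D (p + q + 1) (derivedBracket bracket D p a b) c +
        (-1 : ℤ) ^ ((p.val + 1) * (q.val + 1)) •
          derivedBracket bracket D q b (derivedBracket bracket D p a c) := by
  have hDa := hDodd p a ha
  have hDb := hDodd q b hb
  have key := hjacobi (p+1) (q+1) (D a) (D b) c hDa hDb
  have hderab := hder (p+1) (D a) b hDa
  simp only [derivedBracket, map_smul, LinearMap.smul_apply, hderab, hD2, map_zero, map_zsmul,
    LinearMap.zero_apply, map_add, LinearMap.add_apply, zero_add, smul_add, smul_smul]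
  rw [key]
  rcases (by decide : ∀ x : ZMod 2, x = 0 ∨ x = 1) p with rfl | rfl <;>
    rcases (by decide : ∀ x : ZMod 2, x = 0 ∨ x = 1) q with rfl | rfl <;>
    norm_num [ZMod.val_one, (by decide : (2:ZMod 2).val = 0), (by decide : (3:ZMod 2).val = 1), smul_add, smul_smul, add_comm] <;> abel
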